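/- For real numbers α > 0 and angles β, δ, γ with 0 < β < δ and δ + γ < π and γ > 0, one has 1/sin(δ)^α + 1/sin(β+γ)^α < 1/sin(δ+γ)^α + 1/sin(β)^α. -/

import Mathlib

/-- Convexity of `x ↦ x ^ (-α)` on positive reals, pointwise form. -/
lemma rpow_neg_convex_aux (α : ℝ) (hα : 0 < α) {x y a b : ℝ} (hx : 0 < x) (hy : 0 < y)
    (ha : 0 < a) (hb : 0 < b) (hab : a + b = 1) :
    (a * x + b * y) ^ (-α) ≤ a * x ^ (-α) + b * y ^ (-α) := by
  have hxy : 0 < a * x + b * y := by positivity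
  have hlog : a * Real.log x + b * Real.log y ≤ Real.log (a * x + b * y) := by
    have := strictConcaveOn_log_Ioi.concaveOn.2 (Set.mem_Ioi.2 hx) (Set.mem_Ioi.2 hy)
      ha.le hb.le hab
    simpa [smul_eq_mul] using this
  rw [Real.rpow_def_of_pos hxy, Real.rpow_def_of_pos hx, Real.rpow_def_of_pos hy]
  have h1 : Real.exp (Real.log (a * x + b * y) * (-α)) ≤
      Real.exp (a * (Real.log x * (-α)) + b * (Real.log y * (-α))) := by
    apply Real.exp_le_exp.2
    nlinarith [hlog]
  refine h1.trans ?_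
  simpa [smul_eq_mul] using
    convexOn_exp.2 (Set.mem_univ (Real.log x * (-α))) (Set.mem_univ (Real.log y * (-α)))
      ha.le hb.le hab

/-- For `α > 0` and angles `0 < β < δ`, `γ > 0`, `δ + γ < π`:
`1/sin(δ)^α + 1/sin(β+γ)^α < 1/sin(δ+γ)^α + 1/sin(β)^α`. -/
theorem stmt_2 (α β δ γ : ℝ) (hα : 0 < α) (hβ : 0 < β) (hβδ : β < δ) (hγ : 0 < γ)
    (hδγ : δ + γ < Real.pi) :
    1 / Real.sin δ ^ α + 1 / Real.sin (β + γ) ^ α <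
      1 / Real.sin (δ + γ) ^ α + 1 / Real.sin β ^ α := by
  have hπ : (0:ℝ) < Real.pi := Real.pi_pos
  have hD : 0 < δ + γ - β := by linarith
  set a : ℝ := (δ - β) / (δ + γ - β) with ha_def
  set b : ℝ := γ / (δ + γ - β) with hb_def
  have ha : 0 < a := div_pos (by linarith) hD
  have hb : 0 < b := div_pos hγ hD
  have hab : a + b = 1 := by
    rw [ha_def, hb_def]
    field_simp [ha_def, hb_def]
    ring
  have hmemβ : β ∈ Set.Icc 0 Real.pi := ⟨hβ.le, by linarith⟩
  have hmemδγ : δ + γ ∈ Set.Icc 0 Real.pi := ⟨by linarith, hδγ.le⟩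
  have hne : β ≠ δ + γ := by intro h; linarith
  have hsβ : 0 < Real.sin β := Real.sin_pos_of_pos_of_lt_pi hβ (by linarith)
  have hsδγ : 0 < Real.sin (δ + γ) := Real.sin_pos_of_pos_of_lt_pi (by linarith) hδγ
  have hsδ : 0 ≤ Real.sin δ :=
    (Real.sin_pos_of_pos_of_lt_pi (by linarith) (by linarith)).le
  have hsβγ : 0 ≤ Real.sin (β + γ) :=
    (Real.sin_pos_of_pos_of_lt_pi (by linarith) (by linarith)).le
  -- strict concavity of sin
  have hcomb1 : b * β + a * (δ + γ) = δ := by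
    rw [ha_def, hb_def]; field_simp [ha_def, hb_def]; ring
  have hcomb2 : a * β + b * (δ + γ) = β + γ := by
    rw [ha_def, hb_def]; field_simp [ha_def, hb_def]; ring
  have hsin1 : b * Real.sin β + a * Real.sin (δ + γ) < Real.sin δ := by
    have := strictConcaveOn_sin_Icc.2 hmemβ hmemδγ hne hb ha (by linarith)
    simpa [smul_eq_mul, hcomb1] using this
  have hsin2 : a * Real.sin β + b * Real.sin (δ + γ) < Real.sin (β + γ) := by
    have := strictConcaveOn_sin_Icc.2 hmemβ hmemδγ hne ha hb hab
    simpa [smul_eq_mul, hcomb2] using this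
  have hpos1 : 0 < b * Real.sin β + a * Real.sin (δ + γ) := by positivity
  have hpos2 : 0 < a * Real.sin β + b * Real.sin (δ + γ) := by positivity
  -- rewrite 1 / sin x ^ α as sin x ^ (-α)
  have hr : ∀ x : ℝ, 0 ≤ Real.sin x → 1 / Real.sin x ^ α = Real.sin x ^ (-α) := by
    intro x hx
    rw [Real.rpow_neg hx, one_div]
  rw [hr δ hsδ, hr (β + γ) hsβγ, hr (δ + γ) hsδγ.le, hr β hsβ.le]
  have hneg : -α < 0 := by linarith
  -- strict antitonicity of rpow with negative exponent
  have key1 : Real.sin δ ^ (-α) <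
      b * Real.sin β ^ (-α) + a * Real.sin (δ + γ) ^ (-α) := by
    calc Real.sin δ ^ (-α) < (b * Real.sin β + a * Real.sin (δ + γ)) ^ (-α) :=
          Real.rpow_lt_rpow_of_neg hpos1 hsin1 hneg
      _ ≤ b * Real.sin β ^ (-α) + a * Real.sin (δ + γ) ^ (-α) :=
          rpow_neg_convex_aux α hα hsβ hsδγ hb ha (by linarith)
  have key2 : Real.sin (β + γ) ^ (-α) <
      a * Real.sin β ^ (-α) + b * Real.sin (δ + γ) ^ (-α) := by
    calc Real.sin (β + γ) ^ (-α) < (a * Real.sin β + b * Real.sin (δ + γ)) ^ (-α) :=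
          Real.rpow_lt_rpow_of_neg hpos2 hsin2 hneg
      _ ≤ a * Real.sin β ^ (-α) + b * Real.sin (δ + γ) ^ (-α) :=
          rpow_neg_convex_aux α hα hsβ hsδγ ha hb hab
  have e1 : a * Real.sin β ^ (-α) + b * Real.sin β ^ (-α) = Real.sin β ^ (-α) := by
    rw [← add_mul, hab, one_mul]
  have e2 : a * Real.sin (δ + γ) ^ (-α) + b * Real.sin (δ + γ) ^ (-α) =
      Real.sin (δ + γ) ^ (-α) := by
    rw [← add_mul, hab, one_mul]
  linarith
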